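/- arXiv:2303.05733 — 5 statements merged into one kernel-verified Lean document; each statement's English description precedes it below -/
import Mathlib

section
/- For every t ≥ 1, the weights α_t^i with α_j = (χ+1)/(χ+j) satisfy 1/√(χ+t) ≤ ∑_{i=1}^t α_t^i / √(χ+i) ≤ 2/√(χ+t). -/
noncomputable def Sw (χ : ℝ) (t : ℕ) : ℝ :=
  ∑ i ∈ Finset.Icc 1 t,
    ((χ + 1) / (χ + (i : ℝ)) * ∏ j ∈ Finset.Icc (i + 1) t, (1 - (χ + 1) / (χ + (j : ℝ))))
      / Real.sqrt (χ + i)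

lemma Sw_rec (χ : ℝ) (t : ℕ) (ht : 1 ≤ t) :
    Sw χ (t + 1) = (1 - (χ + 1) / (χ + (t + 1 : ℕ))) * Sw χ t
      + ((χ + 1) / (χ + (t + 1 : ℕ))) / Real.sqrt (χ + (t + 1 : ℕ)) := by
  unfold Sw
  rw [Finset.sum_Icc_succ_top (by omega)]
  have hemp : Finset.Icc (t + 1 + 1) (t + 1) = ∅ := Finset.Icc_eq_empty (by omega)
  rw [hemp, Finset.prod_empty, Finset.mul_sum]
  congr 1
  · refine Finset.sum_congr rfl fun i hi => ?_
    have hi' : i + 1 ≤ t + 1 := by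
      simp only [Finset.mem_Icc] at hi; omega
    rw [Finset.prod_Icc_succ_top hi']
    ring
  · ring

lemma key_sqrt (a b : ℝ) (hb : 0 ≤ b) (hba : b ≤ a - 1) :
    2 * b * Real.sqrt a ≤ (a + b) * Real.sqrt (a - 1) := by
  have ha : (0:ℝ) ≤ a := by linarith
  have h1 : 2 * b * Real.sqrt a = Real.sqrt ((2 * b) ^ 2 * a) := by
    rw [Real.sqrt_mul (by positivity), Real.sqrt_sq (by positivity)]
  have h2 : (a + b) * Real.sqrt (a - 1) = Real.sqrt ((a + b) ^ 2 * (a - 1)) := by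
    rw [Real.sqrt_mul (by positivity), Real.sqrt_sq (by positivity)]
  rw [h1, h2]
  apply Real.sqrt_le_sqrt
  nlinarith [sq_nonneg (a - b), mul_nonneg hb (sub_nonneg.2 hba), sq_nonneg (a + b)]

lemma Sw_bounds (χ : ℝ) (hχ : 0 < χ) : ∀ t : ℕ, 1 ≤ t →
    1 / Real.sqrt (χ + t) ≤ Sw χ t ∧ Sw χ t ≤ 2 / Real.sqrt (χ + t) := by
  intro t ht
  induction t, ht using Nat.le_induction with
  | base =>
    have h1 : χ + (1:ℕ) ≠ 0 := by push_cast; linarith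
    have : Sw χ 1 = 1 / Real.sqrt (χ + (1:ℕ)) := by
      unfold Sw
      rw [Finset.Icc_self, Finset.sum_singleton]
      have : Finset.Icc 2 1 = (∅ : Finset ℕ) := Finset.Icc_eq_empty (by omega)
      rw [this, Finset.prod_empty, mul_one, div_div, div_eq_div_iff]
      · ring
      · positivity
      · have : (0:ℝ) < Real.sqrt (χ + (1:ℕ)) := Real.sqrt_pos.2 (by push_cast; linarith)
        positivity
    rw [this]
    constructor
    · exact le_rfl
    · have hx : (0:ℝ) < Real.sqrt (χ + (1:ℕ)) := Real.sqrt_pos.2 (by push_cast; linarith)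
      gcongr
      norm_num
  | succ t ht ih =>
    have hrec := Sw_rec χ t ht
    set a : ℝ := χ + (t + 1 : ℕ) with ha_def
    have hacast : a = χ + t + 1 := by rw [ha_def]; push_cast; ring
    have ha1 : a - 1 = χ + t := by rw [hacast]; ring
    have hapos : (0:ℝ) < a := by rw [hacast]; positivity
    have ht1 : (1:ℝ) ≤ t := by exact_mod_cast ht
    have ha1pos : (0:ℝ) < a - 1 := by rw [ha1]; linarith
    have hsa : (0:ℝ) < Real.sqrt a := Real.sqrt_pos.2 hapos
    have hs1 : (0:ℝ) < Real.sqrt (a - 1) := Real.sqrt_pos.2 ha1pos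
    have hsle : Real.sqrt (a - 1) ≤ Real.sqrt a := Real.sqrt_le_sqrt (by linarith)
    have hone : 1 - (χ + 1) / a = (t : ℝ) / a := by
      rw [eq_div_iff (ne_of_gt hapos), sub_mul, div_mul_cancel₀ _ (ne_of_gt hapos), hacast]; ring
    have htnn : (0:ℝ) ≤ (t:ℝ) := Nat.cast_nonneg t
    have hα : (χ + 1) / a = (a - t) / a := by rw [hacast]; ring_nf
    obtain ⟨ihl, ihu⟩ := ih
    have hs1' : Real.sqrt (χ + t) = Real.sqrt (a - 1) := by rw [ha1]
    rw [hs1'] at ihl ihu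
    constructor
    · rw [hrec, hone]
      have step1 : (t:ℝ)/a * Sw χ t ≥ (t:ℝ)/a * (1 / Real.sqrt (a-1)) := by
        apply mul_le_mul_of_nonneg_left ihl (by positivity)
      have step2 : (t:ℝ)/a * (1 / Real.sqrt (a-1)) ≥ (t:ℝ)/a * (1 / Real.sqrt a) := by
        gcongr
      have : (t:ℝ)/a * (1 / Real.sqrt a) + (χ+1)/a / Real.sqrt a = 1 / Real.sqrt a * ((t + (χ+1))/a) := by
        ring
      have hsum : (t:ℝ) + (χ + 1) = a := by rw [hacast]; ring
      calc 1 / Real.sqrt a = (t:ℝ)/a * (1 / Real.sqrt a) + (χ+1)/a / Real.sqrt a := by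
            rw [this, hsum, div_self (ne_of_gt hapos), mul_one]
        _ ≤ (t:ℝ)/a * Sw χ t + (χ+1)/a / Real.sqrt a := by linarith
    · rw [hrec, hone]
      have key := key_sqrt a t htnn (by rw [ha1]; linarith)
      have step1 : (t:ℝ)/a * Sw χ t ≤ (t:ℝ)/a * (2 / Real.sqrt (a-1)) := by
        apply mul_le_mul_of_nonneg_left ihu (by positivity)
      have hmain : (t:ℝ)/a * (2 / Real.sqrt (a-1)) ≤ 2 / Real.sqrt a - (χ+1)/a / Real.sqrt a := by
        have hrhs : 2 / Real.sqrt a - (χ+1)/a / Real.sqrt a = (a + t) / (a * Real.sqrt a) := by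
          rw [hα]
          field_simp
          ring
        rw [hrhs, div_mul_div_comm, div_le_div_iff₀ (by positivity) (by positivity)]
        nlinarith [mul_le_mul_of_nonneg_left key hapos.le, mul_pos hapos hsa, mul_pos hapos hs1]
      linarith



/-- 1/√(χ+t) ≤ ∑_{i=1}^t α_t^i / √(χ+i) ≤ 2/√(χ+t). -/
theorem stmt_2 (χ : ℝ) (hχ : 0 < χ) (t : ℕ) (ht : 1 ≤ t) :
    1 / Real.sqrt (χ + t) ≤
      (∑ i ∈ Finset.Icc 1 t,
        ((χ + 1) / (χ + (i : ℝ)) * ∏ j ∈ Finset.Icc (i + 1) t, (1 - (χ + 1) / (χ + (j : ℝ))))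
          / Real.sqrt (χ + i)) ∧
    (∑ i ∈ Finset.Icc 1 t,
        ((χ + 1) / (χ + (i : ℝ)) * ∏ j ∈ Finset.Icc (i + 1) t, (1 - (χ + 1) / (χ + (j : ℝ))))
          / Real.sqrt (χ + i)) ≤ 2 / Real.sqrt (χ + t) := by
  exact Sw_bounds χ hχ t ht
end

section
/- For every i ≥ 1, the infinite sum ∑_{t=i}^∞ α_t^i converges and equals 1 + 1/χ, where α_j = (χ+1)/(χ+j) and α_t^i = α_i · ∏_{j=i+1}^t (1 - α_j). -/
open Finset Filter

/-- for every i ≥ 1, the series ∑_{t=i}^∞ α_t^i converges and sums to 1 + 1/χ,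
where α_t^i = α_i · ∏_{j=i+1}^t (1 - α_j) and α_j = (χ+1)/(χ+j). -/
theorem stmt_3 (χ : ℝ) (hχ : 0 < χ) (i : ℕ) (hi : 1 ≤ i) :
    HasSum
      (fun n : ℕ =>
        (χ + 1) / (χ + (i : ℝ)) *
          ∏ j ∈ Finset.Icc (i + 1) (i + n), (1 - (χ + 1) / (χ + (j : ℝ))))
      (1 + 1 / χ) := by
  set a : ℕ → ℝ := fun n => (χ + 1) / (χ + (i : ℝ)) *
      ∏ j ∈ Finset.Icc (i + 1) (i + n), (1 - (χ + 1) / (χ + (j : ℝ))) with ha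
  set c : ℕ → ℝ := fun n => ∏ k ∈ Finset.range n, ((i : ℝ) + k) / (χ + i + k) with hc
  have hipos : (0:ℝ) < (i:ℝ) := by exact_mod_cast lt_of_lt_of_le one_pos hi
  have hpos : ∀ k : ℕ, (0:ℝ) < χ + i + k := fun k => by positivity
  have hi1 : (1:ℝ) ≤ (i:ℝ) := by exact_mod_cast hi
  have hcsucc : ∀ n, c (n+1) = c n * (((i:ℝ) + n) / (χ + i + n)) := fun n => by
    simp only [hc, Finset.prod_range_succ]
  have hasucc : ∀ n, a (n+1) = a n * (((i:ℝ) + n) / (χ + i + n + 1)) := by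
    intro n
    have h1 : i + (n+1) = (i + n) + 1 := by ring
    have h2 : (i:ℝ) + 1 ≤ (i:ℝ) + n + 1 := by
      have : (0:ℝ) ≤ (n:ℝ) := Nat.cast_nonneg n
      linarith
    simp only [ha, h1]
    rw [Finset.prod_Icc_succ_top (by omega)]
    have h3 : (1 - (χ + 1) / (χ + ((i + n + 1 : ℕ) : ℝ))) =
        ((i:ℝ) + n) / (χ + i + n + 1) := by
      have h4 : (0:ℝ) < χ + (i:ℝ) + n + 1 := by positivity
      push_cast
      rw [show χ + ((i:ℝ) + n + 1) = χ + (i:ℝ) + n + 1 by ring, one_sub_div h4.ne']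
      rw [show χ + (i:ℝ) + n + 1 - (χ + 1) = (i:ℝ) + n by ring]
    rw [h3]; ring
  have key : ∀ n, a n = (1 + 1/χ) * (c n - c (n+1)) := by
    intro n
    induction n with
    | zero =>
      have h0 := hpos 0
      simp only [ha, hc, Nat.add_zero, Finset.Icc_self]
      rw [show Finset.Icc (i+1) i = ∅ from Finset.Icc_eq_empty (by omega)]
      simp only [Finset.prod_empty, mul_one, Finset.prod_range_one, Finset.range_zero,
        Finset.prod_empty, zero_add, Nat.cast_zero, add_zero]
      have hχi : (0:ℝ) < χ + i := by positivity
      field_simp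
      ring
    | succ n ih =>
      rw [hasucc n, ih, hcsucc (n+1), hcsucc n]
      have h1 := hpos n
      have h2 : (0:ℝ) < χ + i + n + 1 := by positivity
      have h3 : (0:ℝ) < χ + i + (n+1 : ℕ) := hpos (n+1)
      push_cast at h3 ⊢
      field_simp
      ring
  -- partial sums
  have hsum : ∀ N, ∑ n ∈ Finset.range N, a n = (1 + 1/χ) * (1 - c N) := by
    intro N
    have : ∑ n ∈ Finset.range N, a n
        = ∑ n ∈ Finset.range N, (1 + 1/χ) * (c n - c (n+1)) := by
      exact Finset.sum_congr rfl fun n _ => key n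
    rw [this, ← Finset.mul_sum, Finset.sum_range_sub' c]
    simp [hc]
  -- nonnegativity
  have hanonneg : ∀ n, 0 ≤ a n := by
    intro n
    apply mul_nonneg (by positivity)
    apply Finset.prod_nonneg
    intro j hj
    rw [Finset.mem_Icc] at hj
    have hj1 : 1 ≤ j := le_trans (by omega) hj.1
    have hj1' : (1:ℝ) ≤ (j:ℝ) := by exact_mod_cast hj1
    have : (χ + 1) / (χ + (j:ℝ)) ≤ 1 := by
      rw [div_le_one (by linarith)]; linarith
    linarith
  -- c tends to 0
  have hczero : Tendsto c atTop (nhds 0) := by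
    have hub : ∀ n, c n ≤ Real.exp (-(χ / (χ + i)) * ∑ k ∈ Finset.range n, (1 / (k + 1) : ℝ)) := by
      intro n
      have step : ∀ k ∈ Finset.range n,
          ((i:ℝ) + k) / (χ + i + k) ≤ Real.exp (-(χ / (χ + i)) * (1 / (k + 1))) := by
        intro k _
        have hk := hpos k
        have h1 : ((i:ℝ) + k) / (χ + i + k) = 1 - χ / (χ + i + k) := by
          field_simp
          ring
        have h2 : χ / (χ + i + k) ≥ (χ / (χ + i)) * (1 / (k + 1)) := by
          rw [ge_iff_le, div_mul_div_comm, mul_one, div_le_div_iff₀ (by positivity) hk]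
          have h3 : χ + (i:ℝ) + k ≤ (χ + i) * (k + 1) := by
            have : (1:ℝ) ≤ χ + i := by linarith
            nlinarith [Nat.cast_nonneg (α := ℝ) k]
          nlinarith
        have h4 := Real.add_one_le_exp (-(χ / (χ + i)) * (1 / (k + 1)))
        rw [h1]
        nlinarith
      calc c n ≤ ∏ k ∈ Finset.range n, Real.exp (-(χ / (χ + i)) * (1 / (k + 1))) := by
            apply Finset.prod_le_prod
            · intro k _; have := hpos k; positivity
            · exact step
        _ = Real.exp (∑ k ∈ Finset.range n, -(χ / (χ + i)) * (1 / (k + 1))) := by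
            rw [Real.exp_sum]
        _ = Real.exp (-(χ / (χ + i)) * ∑ k ∈ Finset.range n, (1 / (k + 1) : ℝ)) := by
            rw [Finset.mul_sum]
    have hlb : ∀ n, 0 ≤ c n := by
      intro n
      apply Finset.prod_nonneg
      intro k _
      have := hpos k
      positivity
    have hdiv : Tendsto (fun n => -(χ / (χ + i)) * ∑ k ∈ Finset.range n, (1 / (k + 1) : ℝ))
        atTop atBot := by
      apply Tendsto.const_mul_atTop_of_neg
      · rw [neg_lt_zero]; positivity
      · exact Real.tendsto_sum_range_one_div_nat_succ_atTop
    have hexp : Tendsto (fun n => Real.exp (-(χ / (χ + i)) * ∑ k ∈ Finset.range n, (1 / (k + 1) : ℝ)))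
        atTop (nhds 0) := Real.tendsto_exp_atBot.comp hdiv
    exact squeeze_zero hlb hub hexp
  rw [hasSum_iff_tendsto_nat_of_nonneg hanonneg]
  simp only [hsum]
  have : Tendsto (fun N => (1 + 1/χ) * (1 - c N)) atTop (nhds ((1 + 1/χ) * (1 - 0))) :=
    Tendsto.const_mul _ (tendsto_const_nhds.sub hczero)
  simpa using this
end

section
/- Let L_t be a nonnegative Lyapunov function of a Markov chain with L_0 = l_0, drift Δ_t = L_{t+1} − L_t, and suppose: (1) there exist γ > 0 and θ > 0 such that E[Δ_t | S_t = s] ≤ −γ whenever L_t ≥ θ, and (2) |L_{t+1} − L_t| ≤ v almost surely with 0 < γ ≤ v. Then for r = γ/(v² + vγ/3), one has E[e^{r L_t}] ≤ e^{r l_0} + 2 e^{r(v+θ)}/(rγ) for all t. -/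
open MeasureTheory

lemma exp_taylor_aux {x u : ℝ} (hu0 : 0 ≤ u) (hu : u ≤ 3/4) (hx : |x| ≤ u) :
    Real.exp x ≤ 1 + x + u ^ 2 / (2 * (1 - u / 3)) := by
  have hx1 : |x| ≤ 1 := hx.trans (by linarith)
  have hb := Real.exp_bound hx1 (n := 4) (by norm_num)
  have hsum : ∑ m ∈ Finset.range 4, x ^ m / m.factorial = 1 + x + x ^ 2 / 2 + x ^ 3 / 6 := by
    simp [Finset.sum_range_succ, Nat.factorial]
  rw [hsum] at hb
  have h1 : Real.exp x ≤ 1 + x + x ^ 2 / 2 + x ^ 3 / 6 + |x| ^ 4 * (5 / 96) := by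
    have h := (abs_sub_le_iff.1 hb).1
    have : ((Nat.factorial 4 : ℝ)) = 24 := by norm_num [Nat.factorial]
    rw [this] at h
    norm_num at h
    linarith
  have hxle := abs_le.1 hx
  have h2 : x ^ 2 ≤ u ^ 2 := by nlinarith [hxle.1, hxle.2]
  have h3 : x ^ 3 ≤ u ^ 3 := by nlinarith [hxle.1, hxle.2, sq_nonneg (x + u), sq_nonneg x]
  have h4 : |x| ^ 4 ≤ u ^ 4 := by
    have := abs_nonneg x
    exact pow_le_pow_left₀ this hx 4
  have hd : (0:ℝ) < 1 - u / 3 := by linarith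
  have key : x ^ 2 / 2 + x ^ 3 / 6 + |x| ^ 4 * (5 / 96) ≤ u ^ 2 / (2 * (1 - u / 3)) := by
    rw [le_div_iff₀ (by linarith : (0:ℝ) < 2 * (1 - u / 3))]
    nlinarith [pow_nonneg hu0 4, pow_nonneg hu0 3, pow_nonneg hu0 5]
  linarith

/-- Lyapunov drift ⇒ bounded moment generating function: if a nonnegative
adapted process `L` with `L 0 = l0` has one-step increments bounded by `v` a.s. and
conditional expected drift at most `−γ` whenever `L t ≥ θ`, with `0 < γ ≤ v`, then for
`r = γ/(v² + vγ/3)` we have `E[e^{r L t}] ≤ e^{r l0} + 2 e^{r(v+θ)}/(rγ)` for all `t`. -/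
theorem stmt_7 {Ω : Type*} {m0 : MeasurableSpace Ω} {μ : Measure Ω} [IsProbabilityMeasure μ]
    (ℱ : Filtration ℕ m0) (L : ℕ → Ω → ℝ) (l0 γ v θ : ℝ)
    (hγ : 0 < γ) (hθ : 0 < θ) (hγv : γ ≤ v)
    (hadapted : Adapted ℱ L)
    (hL0 : ∀ ω, L 0 ω = l0)
    (hLnonneg : ∀ t ω, 0 ≤ L t ω)
    (hbdd : ∀ t, ∀ᵐ ω ∂μ, |L (t + 1) ω - L t ω| ≤ v)
    (hdrift : ∀ t, ∀ᵐ ω ∂μ,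
      θ ≤ L t ω → (μ[fun ω' => L (t + 1) ω' - L t ω' | ℱ t]) ω ≤ -γ)
    (r : ℝ) (hr : r = γ / (v ^ 2 + v * γ / 3))
    (hint : ∀ t, Integrable (fun ω => Real.exp (r * L t ω)) μ) :
    ∀ t, ∫ ω, Real.exp (r * L t ω) ∂μ ≤
      Real.exp (r * l0) + 2 * Real.exp (r * (v + θ)) / (r * γ) := by

  have hv : 0 < v := hγ.trans_le hγv
  have hD : 0 < v ^ 2 + v * γ / 3 := by positivity
  have hr0 : 0 < r := by rw [hr]; positivity
  have hrD : r * (v ^ 2 + v * γ / 3) = γ := by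
    rw [hr]; field_simp
  have hrv : r * v ≤ 3 / 4 := by
    rw [hr, div_mul_eq_mul_div, div_le_iff₀ hD]; nlinarith
  have hrγ : r * γ ≤ 1 := by
    rw [hr, div_mul_eq_mul_div, div_le_iff₀ hD]; nlinarith
  have hrγ0 : 0 < r * γ := by positivity
  have hkey : (r * v) ^ 2 / (2 * (1 - r * v / 3)) = r * γ / 2 := by
    have hd : (0:ℝ) < 2 * (1 - r * v / 3) := by linarith
    rw [div_eq_iff (ne_of_gt hd)]
    linear_combination r * hrD
  -- one-step recursion
  have step : ∀ t, ∫ ω, Real.exp (r * L (t + 1) ω) ∂μ ≤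
      (1 - r * γ / 2) * (∫ ω, Real.exp (r * L t ω) ∂μ) + Real.exp (r * (v + θ)) := by
    intro t
    set Δ : Ω → ℝ := fun ω => L (t + 1) ω - L t ω with hΔdef
    set f : Ω → ℝ := fun ω => Real.exp (r * L t ω) with hfdef
    set g : Ω → ℝ := fun ω => Real.exp (r * Δ ω) with hgdef
    have hfg : (fun ω => Real.exp (r * L (t + 1) ω)) = f * g := by
      funext ω
      simp only [Pi.mul_apply, hfdef, hgdef, hΔdef, ← Real.exp_add]
      ring_nf
    -- measurability
    have hLt_sm : StronglyMeasurable[ℱ t] (L t) := (hadapted t).stronglyMeasurable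
    have hf_sm : StronglyMeasurable[ℱ t] f :=
      Real.continuous_exp.comp_stronglyMeasurable (hLt_sm.const_mul r)
    have hLm : ∀ s, AEStronglyMeasurable (L s) μ :=
      fun s => ((hadapted s).mono (ℱ.le s) le_rfl).aestronglyMeasurable
    have hΔm : AEStronglyMeasurable Δ μ := (hLm (t + 1)).sub (hLm t)
    have hgm : AEStronglyMeasurable g μ :=
      (Real.continuous_exp.comp_aestronglyMeasurable (hΔm.const_mul r))
    -- integrability
    have hΔint : Integrable Δ μ :=
      ⟨hΔm, HasFiniteIntegral.of_bounded ((hbdd t).mono (fun ω h => by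
        simpa [Real.norm_eq_abs] using h))⟩
    have hgbound : ∀ᵐ ω ∂μ, g ω ≤ Real.exp (r * v) := by
      filter_upwards [hbdd t] with ω h
      show Real.exp (r * (L (t + 1) ω - L t ω)) ≤ Real.exp (r * v)
      exact Real.exp_le_exp.2 (mul_le_mul_of_nonneg_left (abs_le.1 h).2 hr0.le)
    have hgint : Integrable g μ :=
      ⟨hgm, HasFiniteIntegral.of_bounded (hgbound.mono (fun ω h => by
        rw [Real.norm_eq_abs, abs_of_pos (Real.exp_pos _)]; exact h))⟩
    have hfgint : Integrable (f * g) μ := by rw [← hfg]; exact hint (t + 1)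
    -- pull-out property
    have hpull : μ[f * g|ℱ t] =ᵐ[μ] f * μ[g|ℱ t] :=
      condExp_mul_of_stronglyMeasurable_left hf_sm hfgint hgint
    -- pointwise bound on g
    have hgb : ∀ᵐ ω ∂μ, g ω ≤ (1 + r * γ / 2) + r * Δ ω := by
      filter_upwards [hbdd t] with ω h
      have hx : |r * Δ ω| ≤ r * v := by
        rw [abs_mul, abs_of_pos hr0]
        exact mul_le_mul_of_nonneg_left h hr0.le
      have := exp_taylor_aux (by positivity) hrv hx
      rw [hkey] at this
      calc g ω ≤ 1 + r * Δ ω + r * γ / 2 := this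
        _ = (1 + r * γ / 2) + r * Δ ω := by ring
    -- conditional expectation bounds
    have hcΔ : μ[fun ω => (1 + r * γ / 2) + r * Δ ω|ℱ t]
        =ᵐ[μ] fun ω => (1 + r * γ / 2) + r * (μ[Δ|ℱ t]) ω := by
      have h1 : (fun ω => (1 + r * γ / 2) + r * Δ ω)
          = (fun _ => (1 + r * γ / 2)) + (r • Δ) := by
        funext ω; simp [smul_eq_mul]
      rw [h1]
      refine (condExp_add (integrable_const _) (hΔint.smul r) _).trans ?_
      have h2 := condExp_smul (μ := μ) (m := (ℱ t : MeasurableSpace Ω)) r Δ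
      filter_upwards [h2] with ω h3
      simp only [Pi.add_apply, Pi.smul_apply, smul_eq_mul] at h3 ⊢
      rw [condExp_const (ℱ.le t), h3]
    have hcond1 : μ[g|ℱ t] ≤ᵐ[μ] fun ω => (1 + r * γ / 2) + r * (μ[Δ|ℱ t]) ω := by
      have hsumint : Integrable (fun ω => (1 + r * γ / 2) + r * Δ ω) μ :=
        (integrable_const _).add (hΔint.smul r)
      exact (condExp_mono hgint hsumint hgb).trans_eq hcΔ
    have hcondv : μ[g|ℱ t] ≤ᵐ[μ] fun _ => Real.exp (r * v) := by
      have := condExp_mono (m := (ℱ t : MeasurableSpace Ω)) hgint (integrable_const _) hgbound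
      have hconst : μ[(fun _ => Real.exp (r * v) : Ω → ℝ)|ℱ t] = fun _ => Real.exp (r * v) :=
        condExp_const (μ := μ) (ℱ.le t) _
      exact hconst ▸ this
    -- main pointwise bound on μ[f*g|ℱ t]
    have hmain : μ[f * g|ℱ t] ≤ᵐ[μ]
        fun ω => (1 - r * γ / 2) * f ω + Real.exp (r * (v + θ)) := by
      filter_upwards [hpull, hcond1, hcondv, hdrift t] with ω h1 h2 h3 h4
      rw [h1, Pi.mul_apply]
      have hf0 : 0 ≤ f ω := (Real.exp_pos _).le
      by_cases hθω : θ ≤ L t ω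
      · have h5 : (μ[Δ|ℱ t]) ω ≤ -γ := h4 hθω
        have : f ω * (μ[g|ℱ t]) ω ≤ f ω * (1 - r * γ / 2) := by
          refine le_trans (mul_le_mul_of_nonneg_left h2 hf0) ?_
          refine mul_le_mul_of_nonneg_left ?_ hf0
          nlinarith
        refine this.trans ?_
        have := (Real.exp_pos (r * (v + θ))).le
        linarith [mul_comm (f ω) (1 - r * γ / 2)]
      · push_neg at hθω
        have hfθ : f ω ≤ Real.exp (r * θ) :=
          Real.exp_le_exp.2 (mul_le_mul_of_nonneg_left hθω.le hr0.le)
        have h6 : f ω * (μ[g|ℱ t]) ω ≤ Real.exp (r * θ) * Real.exp (r * v) := by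
          calc f ω * (μ[g|ℱ t]) ω ≤ f ω * Real.exp (r * v) :=
                mul_le_mul_of_nonneg_left h3 hf0
            _ ≤ Real.exp (r * θ) * Real.exp (r * v) :=
                mul_le_mul_of_nonneg_right hfθ (Real.exp_pos _).le
        have h7 : Real.exp (r * θ) * Real.exp (r * v) = Real.exp (r * (v + θ)) := by
          rw [← Real.exp_add]; ring_nf
        have h8 : 0 ≤ (1 - r * γ / 2) * f ω := by
          apply mul_nonneg (by linarith) hf0
        linarith [h6, h7 ▸ h6]
    -- integrate
    have hRHSint : Integrable (fun ω => (1 - r * γ / 2) * f ω + Real.exp (r * (v + θ))) μ :=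
      ((hint t).const_mul _).add (integrable_const _)
    have hInt1 : ∫ ω, Real.exp (r * L (t + 1) ω) ∂μ = ∫ ω, (μ[f * g|ℱ t]) ω ∂μ := by
      rw [integral_condExp (ℱ.le t), ← hfg]
    rw [hInt1]
    calc ∫ ω, (μ[f * g|ℱ t]) ω ∂μ
        ≤ ∫ ω, ((1 - r * γ / 2) * f ω + Real.exp (r * (v + θ))) ∂μ :=
          integral_mono_ae integrable_condExp hRHSint hmain
      _ = (1 - r * γ / 2) * (∫ ω, f ω ∂μ) + Real.exp (r * (v + θ)) := by
          rw [integral_add ((hint t).const_mul _) (integrable_const _),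
            integral_const_mul, integral_const]
          simp [hfdef]
  -- induction
  intro t
  induction t with
  | zero =>
    have : ∫ ω, Real.exp (r * L 0 ω) ∂μ = Real.exp (r * l0) := by
      simp only [hL0]
      rw [integral_const]; simp
    rw [this]
    have : 0 ≤ 2 * Real.exp (r * (v + θ)) / (r * γ) := by positivity
    linarith
  | succ t ih =>
    have h1 := step t
    have ha : (0:ℝ) ≤ 1 - r * γ / 2 := by linarith
    have h2 : (1 - r * γ / 2) * (∫ ω, Real.exp (r * L t ω) ∂μ) ≤
        (1 - r * γ / 2) * (Real.exp (r * l0) + 2 * Real.exp (r * (v + θ)) / (r * γ)) :=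
      mul_le_mul_of_nonneg_left ih ha
    have h3 : (1 - r * γ / 2) * (Real.exp (r * l0) + 2 * Real.exp (r * (v + θ)) / (r * γ))
        + Real.exp (r * (v + θ)) ≤
        Real.exp (r * l0) + 2 * Real.exp (r * (v + θ)) / (r * γ) := by
      have he1 : (0:ℝ) ≤ Real.exp (r * l0) := (Real.exp_pos _).le
      have he2 : (0:ℝ) < Real.exp (r * (v + θ)) := Real.exp_pos _
      have hgd : (r * γ / 2) * (2 * Real.exp (r * (v + θ)) / (r * γ)) =
          Real.exp (r * (v + θ)) := by
        field_simp
      nlinarith [mul_nonneg (le_of_lt hrγ0) he1]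
    linarith
end

section
/- Consider a linear program over occupation measures q_h(x,a) ≥ 0 on [H]×S×A with flow conservation, normalization, fixed initial distribution, and constraint ∑_{h,x,a} q_h(x,a) g_h(x,a) ≥ ρ, with rewards r_h(x,a) ∈ [0,1]. Suppose there exists a feasible q^{ξ} with ∑_{h,x,a} q^{ξ}_h(x,a) g_h(x,a) ≥ ρ + δ (Slater's condition). Then for any 0 < ε ≤ δ, the optimal value of the LP exceeds the optimal value of the ε-tightened LP (with constraint ≥ ρ + ε) by at most Hε/δ. -/
open Finset

/-- Feasibility for the occupation-measure LP with utility constraint level `level`: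
nonnegativity, flow conservation, per-step normalization, fixed initial distribution,
and cumulative utility at least `level`. -/
def LPFeasible {S A : Type} [Fintype S] [Fintype A] (H : ℕ)
    (P : ℕ → S → A → S → ℝ) (g : ℕ → S → A → ℝ) (μ0 : S → ℝ) (level : ℝ)
    (q : ℕ → S → A → ℝ) : Prop :=
  (∀ h x a, 0 ≤ q h x a) ∧
  (∀ h, 2 ≤ h → h ≤ H → ∀ x : S,
    ∑ a : A, q h x a = ∑ x' : S, ∑ a' : A, P (h - 1) x' a' x * q (h - 1) x' a') ∧
  (∀ h, 1 ≤ h → h ≤ H → ∑ x : S, ∑ a : A, q h x a = 1) ∧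
  (∀ x : S, ∑ a : A, q 1 x a = μ0 x) ∧
  (level ≤ ∑ h ∈ Finset.Icc 1 H, ∑ x : S, ∑ a : A, q h x a * g h x a)

/-- Objective value of the occupation-measure LP. -/
def LPValue {S A : Type} [Fintype S] [Fintype A] (H : ℕ)
    (r : ℕ → S → A → ℝ) (q : ℕ → S → A → ℝ) : ℝ :=
  ∑ h ∈ Finset.Icc 1 H, ∑ x : S, ∑ a : A, q h x a * r h x a

private lemma triple_lin {S A : Type} [Fintype S] [Fintype A] (H : ℕ)
    (f : ℕ → S → A → ℝ) (u v : ℕ → S → A → ℝ) (c d : ℝ) :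
    ∑ h ∈ Finset.Icc 1 H, ∑ x : S, ∑ a : A,
      (c * u h x a + d * v h x a) * f h x a =
    c * (∑ h ∈ Finset.Icc 1 H, ∑ x : S, ∑ a : A, u h x a * f h x a) +
    d * (∑ h ∈ Finset.Icc 1 H, ∑ x : S, ∑ a : A, v h x a * f h x a) := by
  simp only [Finset.mul_sum, ← Finset.sum_add_distrib]
  refine Finset.sum_congr rfl fun h _ => Finset.sum_congr rfl fun x _ =>
    Finset.sum_congr rfl fun a _ => by ring

/-- under Slater's condition with margin δ, for any 0 < ε ≤ δ the optimal
value of the LP exceeds the optimal value of the ε-tightened LP by at most Hε/δ. -/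
theorem stmt_9 {S A : Type} [Fintype S] [Fintype A] (H : ℕ) (hH : 1 ≤ H)
    (P : ℕ → S → A → S → ℝ) (hP : ∀ h x a x', 0 ≤ P h x a x')
    (r g : ℕ → S → A → ℝ)
    (hr : ∀ h x a, 0 ≤ r h x a ∧ r h x a ≤ 1)
    (hg : ∀ h x a, 0 ≤ g h x a ∧ g h x a ≤ 1)
    (μ0 : S → ℝ) (ρ δ ε : ℝ) (hρ0 : 0 ≤ ρ) (hρH : ρ ≤ H)
    (hδ : 0 < δ) (hε : 0 < ε) (hεδ : ε ≤ δ)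
    (qxi qstar qeps : ℕ → S → A → ℝ)
    (hslater : LPFeasible H P g μ0 (ρ + δ) qxi)
    (hstar_feas : LPFeasible H P g μ0 ρ qstar)
    (hstar_opt : ∀ q, LPFeasible H P g μ0 ρ q → LPValue H r q ≤ LPValue H r qstar)
    (heps_feas : LPFeasible H P g μ0 (ρ + ε) qeps)
    (heps_opt : ∀ q, LPFeasible H P g μ0 (ρ + ε) q → LPValue H r q ≤ LPValue H r qeps) :
    LPValue H r qstar - LPValue H r qeps ≤ H * ε / δ := by
  set l : ℝ := ε / δ with hl
  have hl0 : 0 ≤ l := div_nonneg hε.le hδ.le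
  have hl1 : l ≤ 1 := (div_le_one hδ).mpr hεδ
  have hlδ : l * δ = ε := div_mul_cancel₀ ε hδ.ne'
  obtain ⟨hs1, hs2, hs3, hs4, hs5⟩ := hstar_feas
  obtain ⟨hx1, hx2, hx3, hx4, hx5⟩ := hslater
  set q2 : ℕ → S → A → ℝ := fun h x a => (1 - l) * qstar h x a + l * qxi h x a with hq2
  have hfeas : LPFeasible H P g μ0 (ρ + ε) q2 := by
    refine ⟨?_, ?_, ?_, ?_, ?_⟩
    · intro h x a
      exact add_nonneg (mul_nonneg (by linarith) (hs1 h x a))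
        (mul_nonneg hl0 (hx1 h x a))
    · intro h h2 hH' x
      have e1 := hs2 h h2 hH' x
      have e2 := hx2 h h2 hH' x
      simp only [hq2]
      rw [Finset.sum_add_distrib, ← Finset.mul_sum, ← Finset.mul_sum, e1, e2,
        Finset.mul_sum, Finset.mul_sum, ← Finset.sum_add_distrib]
      refine Finset.sum_congr rfl fun x' _ => ?_
      rw [Finset.mul_sum, Finset.mul_sum, ← Finset.sum_add_distrib]
      exact Finset.sum_congr rfl fun a' _ => by ring
    · intro h h1 hH'
      have e1 := hs3 h h1 hH'
      have e2 := hx3 h h1 hH'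
      simp only [hq2]
      rw [show (∑ x : S, ∑ a : A, ((1 - l) * qstar h x a + l * qxi h x a))
          = (1 - l) * (∑ x : S, ∑ a : A, qstar h x a)
            + l * (∑ x : S, ∑ a : A, qxi h x a) by
        simp only [Finset.mul_sum, ← Finset.sum_add_distrib], e1, e2]
      ring
    · intro x
      simp only [hq2]
      rw [Finset.sum_add_distrib, ← Finset.mul_sum, ← Finset.mul_sum, hs4 x, hx4 x]
      ring
    · rw [triple_lin H g qstar qxi (1 - l) l]
      have h1 : (1 - l) * ρ ≤ (1 - l) * (∑ h ∈ Finset.Icc 1 H, ∑ x : S, ∑ a : A,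
          qstar h x a * g h x a) := mul_le_mul_of_nonneg_left hs5 (by linarith)
      have h2 : l * (ρ + δ) ≤ l * (∑ h ∈ Finset.Icc 1 H, ∑ x : S, ∑ a : A,
          qxi h x a * g h x a) := mul_le_mul_of_nonneg_left hx5 hl0
      nlinarith
  have hval : LPValue H r q2 = (1 - l) * LPValue H r qstar + l * LPValue H r qxi := by
    simp only [LPValue, hq2]
    exact triple_lin H r qstar qxi (1 - l) l
  have hle := heps_opt q2 hfeas
  have hstarH : LPValue H r qstar ≤ H := by
    unfold LPValue
    calc ∑ h ∈ Finset.Icc 1 H, ∑ x : S, ∑ a : A, qstar h x a * r h x a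
        ≤ ∑ h ∈ Finset.Icc 1 H, (1 : ℝ) := by
          refine Finset.sum_le_sum fun h hh => ?_
          rw [Finset.mem_Icc] at hh
          calc ∑ x : S, ∑ a : A, qstar h x a * r h x a
              ≤ ∑ x : S, ∑ a : A, qstar h x a := by
                refine Finset.sum_le_sum fun x _ => Finset.sum_le_sum fun a _ => ?_
                nlinarith [hs1 h x a, (hr h x a).1, (hr h x a).2]
            _ = 1 := hs3 h hh.1 hh.2
      _ = H := by simp
  have hxi0 : 0 ≤ LPValue H r qxi := by
    unfold LPValue
    refine Finset.sum_nonneg fun h _ => Finset.sum_nonneg fun x _ =>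
      Finset.sum_nonneg fun a _ => mul_nonneg (hx1 h x a) (hr h x a).1
  have goal_eq : (H : ℝ) * ε / δ = l * H := by
    rw [hl]; ring
  rw [goal_eq]
  nlinarith
end

section
/- Let {φ_k}_{k=1}^K be vectors in ℝ^d with ‖φ_k‖ ≤ 1, let Λ_1 = λ I with λ ≥ 1, and Λ_{k+1} = Λ_k + φ_k φ_k^T. Then ∑_{k=1}^K φ_k^T Λ_k^{-1} φ_k ≤ 2 log(det(Λ_{K+1}) / det(Λ_1)) ≤ 2 d log((λ + K)/λ). -/
open Finset Matrix

/-- Gram matrix Λ_k = λ I + ∑_{τ<k} φ_τ φ_τᵀ. -/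
noncomputable def GramLam (d : ℕ) (lam : ℝ) (φ : ℕ → Fin d → ℝ) (k : ℕ) :
    Matrix (Fin d) (Fin d) ℝ :=
  lam • (1 : Matrix (Fin d) (Fin d) ℝ) + ∑ τ ∈ Finset.range k, Matrix.vecMulVec (φ τ) (φ τ)

variable {d : ℕ} {lam : ℝ} {φ : ℕ → Fin d → ℝ}

lemma vmv_mulVec (u v : Fin d → ℝ) : Matrix.vecMulVec u u *ᵥ v = (u ⬝ᵥ v) • u := by
  funext i
  simp only [Matrix.vecMulVec, Matrix.mulVec, dotProduct, Matrix.of_apply, Pi.smul_apply,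
    smul_eq_mul, Finset.sum_mul]
  exact Finset.sum_congr rfl fun j _ => by ring

lemma sum_mulVec' {s : Finset ℕ} (M : ℕ → Matrix (Fin d) (Fin d) ℝ) (v : Fin d → ℝ) :
    (∑ τ ∈ s, M τ) *ᵥ v = ∑ τ ∈ s, M τ *ᵥ v := by
  induction s using Finset.induction with
  | empty => simp [Matrix.mulVec, dotProduct]
  | insert a s' h ih => simp [Finset.sum_insert h, Matrix.add_mulVec, ih]

lemma dotProduct_sum' {s : Finset ℕ} (v : Fin d → ℝ) (f : ℕ → Fin d → ℝ) :
    v ⬝ᵥ (∑ τ ∈ s, f τ) = ∑ τ ∈ s, v ⬝ᵥ f τ := by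
  induction s using Finset.induction with
  | empty => simp
  | insert a s' h ih => simp [Finset.sum_insert h, dotProduct_add, ih]

lemma quad (k : ℕ) (v : Fin d → ℝ) :
    v ⬝ᵥ (GramLam d lam φ k *ᵥ v) =
      lam * (v ⬝ᵥ v) + ∑ τ ∈ Finset.range k, (φ τ ⬝ᵥ v) ^ 2 := by
  simp only [GramLam, Matrix.add_mulVec, dotProduct_add, Matrix.smul_mulVec,
    Matrix.one_mulVec, dotProduct_smul, smul_eq_mul, sum_mulVec', vmv_mulVec]
  congr 1
  rw [dotProduct_sum']
  refine Finset.sum_congr rfl fun τ _ => ?_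
  rw [dotProduct_smul, smul_eq_mul, dotProduct_comm, sq]

lemma gram_herm (k : ℕ) : (GramLam d lam φ k).IsHermitian := by
  unfold GramLam
  apply Matrix.IsHermitian.add
  · show (lam • (1:Matrix (Fin d) (Fin d) ℝ))ᴴ = _
    rw [Matrix.conjTranspose_smul]
    simp
  · apply Finset.sum_induction _ Matrix.IsHermitian
    · exact fun a b => Matrix.IsHermitian.add
    · exact Matrix.isHermitian_zero
    · intro τ _
      ext i j
      simp [Matrix.vecMulVec, mul_comm]

lemma gram_posdef (hlam : 0 < lam) (k : ℕ) : (GramLam d lam φ k).PosDef := by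
  refine Matrix.PosDef.of_dotProduct_mulVec_pos (gram_herm k) fun x hx => ?_
  have hs : star x = x := by simp
  rw [hs, quad]
  have h1 : 0 < x ⬝ᵥ x := by
    rcases Function.ne_iff.mp hx with ⟨i, hi⟩
    have : (0:ℝ) < x i ^ 2 := lt_of_le_of_ne (sq_nonneg _) (Ne.symm (pow_ne_zero 2 hi))
    calc (0:ℝ) < x i ^ 2 := this
      _ ≤ ∑ j, x j ^ 2 := Finset.single_le_sum (f := fun j => x j ^ 2)
          (fun j _ => sq_nonneg _) (Finset.mem_univ i)
      _ = x ⬝ᵥ x := by simp [dotProduct, sq]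
  have h2 : (0:ℝ) ≤ ∑ τ ∈ Finset.range k, (φ τ ⬝ᵥ x) ^ 2 :=
    Finset.sum_nonneg fun τ _ => sq_nonneg _
  nlinarith

lemma dp_sq_le (u v : Fin d → ℝ) : (u ⬝ᵥ v) ^ 2 ≤ (u ⬝ᵥ u) * (v ⬝ᵥ v) := by
  have := Finset.sum_mul_sq_le_sq_mul_sq Finset.univ u v
  simpa [dotProduct, sq] using this

lemma xk_mem (hlam : 1 ≤ lam) (k : ℕ) (hφk : φ k ⬝ᵥ φ k ≤ 1) :
    0 ≤ φ k ⬝ᵥ ((GramLam d lam φ k)⁻¹ *ᵥ φ k) ∧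
      φ k ⬝ᵥ ((GramLam d lam φ k)⁻¹ *ᵥ φ k) ≤ 1 := by
  have hpd := gram_posdef (lam := lam) (φ := φ) (lt_of_lt_of_le one_pos hlam) k
  set A := GramLam d lam φ k with hA
  set w : Fin d → ℝ := A⁻¹ *ᵥ φ k with hw
  have hAw : A *ᵥ w = φ k := by
    rw [hw, Matrix.mulVec_mulVec, Matrix.mul_nonsing_inv _ hpd.det_pos.ne'.isUnit,
      Matrix.one_mulVec]
  have hx : φ k ⬝ᵥ w = w ⬝ᵥ (A *ᵥ w) := by rw [hAw, dotProduct_comm]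
  have hquad : w ⬝ᵥ (A *ᵥ w) = lam * (w ⬝ᵥ w) + ∑ τ ∈ Finset.range k, (φ τ ⬝ᵥ w) ^ 2 :=
    quad k w
  have hww : 0 ≤ w ⬝ᵥ w := Finset.sum_nonneg fun i _ => mul_self_nonneg (w i)
  have hsum : 0 ≤ ∑ τ ∈ Finset.range k, (φ τ ⬝ᵥ w) ^ 2 :=
    Finset.sum_nonneg fun τ _ => sq_nonneg _
  have hge : w ⬝ᵥ w ≤ φ k ⬝ᵥ w := by rw [hx, hquad]; nlinarith
  have hcs : (φ k ⬝ᵥ w) ^ 2 ≤ w ⬝ᵥ w := by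
    have := dp_sq_le (φ k) w
    nlinarith
  constructor
  · nlinarith
  · nlinarith

lemma det_succ (hlam : 1 ≤ lam) (k : ℕ) :
    (GramLam d lam φ (k + 1)).det =
      (GramLam d lam φ k).det * (1 + φ k ⬝ᵥ ((GramLam d lam φ k)⁻¹ *ᵥ φ k)) := by
  have hpd := gram_posdef (lam := lam) (φ := φ) (lt_of_lt_of_le one_pos hlam) k
  have hstep : GramLam d lam φ (k + 1) =
      GramLam d lam φ k + Matrix.replicateCol (Fin 1) (φ k) * Matrix.replicateRow (Fin 1) (φ k) := by
    erw [← Matrix.vecMulVec_eq (Fin 1)]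
    unfold GramLam
    rw [Finset.sum_range_succ, add_assoc]
  erw [hstep, Matrix.det_add_replicateCol_mul_replicateRow (ι := Fin 1) hpd.det_pos.ne'.isUnit]
  congr 1
  rw [show (fun a b => decidableEq_of_subsingleton a b : DecidableEq (Fin 1)) =
    instDecidableEqFin 1 from Subsingleton.elim _ _]
  erw [Matrix.det_fin_one]
  simp only [Matrix.add_apply, Matrix.one_apply_eq]
  congr 1
  simp only [Matrix.mul_apply, Matrix.replicateRow_apply, Matrix.replicateCol_apply, Matrix.mulVec,
    dotProduct, Finset.mul_sum, Finset.sum_mul]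
  rw [Finset.sum_comm]
  refine Finset.sum_congr rfl fun i _ => Finset.sum_congr rfl fun j _ => by ring

lemma key_log (x : ℝ) (h0 : 0 ≤ x) (h1 : x ≤ 1) : x ≤ 2 * Real.log (1 + x) := by
  have hx : Real.exp (x / 2) ≤ 1 + x := by
    have hc := convexOn_exp.2 (Set.mem_univ (0:ℝ)) (Set.mem_univ (1/2 : ℝ))
      (by linarith : (0:ℝ) ≤ 1 - x) h0 (by ring)
    simp only [smul_eq_mul, mul_zero, zero_add, Real.exp_zero, mul_one] at hc
    have h2 : Real.exp (1/2) ≤ 2 := by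
      nlinarith [Real.exp_one_lt_d9, Real.exp_pos (1/2 : ℝ),
        (Real.exp_add (1/2) (1/2)).symm.trans (by norm_num : Real.exp (1/2 + 1/2) = Real.exp 1)]
    calc Real.exp (x / 2) = Real.exp ((1 - x) * 0 + x * (1/2)) := by ring_nf
      _ ≤ (1 - x) * 1 + x * Real.exp (1/2) := by simpa using hc
      _ ≤ 1 + x := by nlinarith
  have := Real.le_log_iff_exp_le (by linarith : (0:ℝ) < 1 + x) |>.2 hx
  linarith

lemma det0 : (GramLam d lam φ 0).det = lam ^ d := by
  unfold GramLam
  simp [Matrix.det_smul]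

lemma telescope (hlam : 1 ≤ lam) (n : ℕ) :
    Real.log ((GramLam d lam φ n).det) = Real.log ((GramLam d lam φ 0).det) +
      ∑ k ∈ Finset.range n, Real.log (1 + φ k ⬝ᵥ ((GramLam d lam φ k)⁻¹ *ᵥ φ k)) := by
  induction n with
  | zero => simp
  | succ n ih =>
    have hpd := gram_posdef (lam := lam) (φ := φ) (lt_of_lt_of_le one_pos hlam) n
    have hx0 : 0 ≤ φ n ⬝ᵥ ((GramLam d lam φ n)⁻¹ *ᵥ φ n) := by
      have hinv := hpd.inv
      have hs : star (φ n) = φ n := by simp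
      rcases eq_or_ne (φ n) 0 with h | h
      · simp [h, dotProduct]
      · have := hinv.dotProduct_mulVec_pos h
        rw [hs] at this
        exact this.le
    rw [det_succ hlam n, Real.log_mul hpd.det_pos.ne' (by linarith), ih,
      Finset.sum_range_succ]
    ring

lemma eig_bound {K : ℕ} (hlam : 0 < lam) (hφ : ∀ k < K, φ k ⬝ᵥ φ k ≤ 1) (i : Fin d) :
    (gram_herm (d := d) (lam := lam) (φ := φ) K).eigenvalues i ≤ lam + K := by
  set hH := gram_herm (d := d) (lam := lam) (φ := φ) K
  set v : Fin d → ℝ := ⇑(hH.eigenvectorBasis i) with hv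
  have hnorm : ‖hH.eigenvectorBasis i‖ = 1 := hH.eigenvectorBasis.orthonormal.1 i
  have hvv : v ⬝ᵥ v = 1 := by
    have h1 : (inner ℝ (hH.eigenvectorBasis i) (hH.eigenvectorBasis i) : ℝ) = 1 := by
      rw [real_inner_self_eq_norm_sq, hnorm]; norm_num
    rw [← h1, PiLp.inner_apply]
    simp [dotProduct, hv, sq]
  have heq := hH.eigenvalues_eq i
  have hsv : star v = v := by simp
  have : hH.eigenvalues i = v ⬝ᵥ (GramLam d lam φ K *ᵥ v) := by
    simpa [hv, hsv] using heq
  rw [this, quad, hvv, mul_one]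
  have hsum : ∑ τ ∈ Finset.range K, (φ τ ⬝ᵥ v) ^ 2 ≤ K := by
    calc ∑ τ ∈ Finset.range K, (φ τ ⬝ᵥ v) ^ 2 ≤ ∑ τ ∈ Finset.range K, 1 := by
          refine Finset.sum_le_sum fun τ hτ => ?_
          have := dp_sq_le (φ τ) v
          have h1 := hφ τ (Finset.mem_range.mp hτ)
          nlinarith [hvv]
      _ = K := by simp
  linarith

/-- elliptical potential lemma:
∑_{k=1}^K φ_kᵀ Λ_k⁻¹ φ_k ≤ 2 log(det Λ_{K+1} / det Λ_1) ≤ 2 d log((λ+K)/λ). -/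
theorem stmt_13 (d K : ℕ) (hd : 0 < d) (hK : 0 < K) (lam : ℝ) (hlam : 1 ≤ lam)
    (φ : ℕ → Fin d → ℝ) (hφ : ∀ k < K, ∑ i, (φ k i) ^ 2 ≤ 1) :
    (∑ k ∈ Finset.range K, φ k ⬝ᵥ ((GramLam d lam φ k)⁻¹ *ᵥ φ k) ≤
        2 * Real.log ((GramLam d lam φ K).det / (GramLam d lam φ 0).det)) ∧
    2 * Real.log ((GramLam d lam φ K).det / (GramLam d lam φ 0).det) ≤
        2 * d * Real.log ((lam + K) / lam) := by
  have hlam0 : (0:ℝ) < lam := lt_of_lt_of_le one_pos hlam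
  have hφ' : ∀ k < K, φ k ⬝ᵥ φ k ≤ 1 := by
    intro k hk
    have := hφ k hk
    simpa [dotProduct, sq] using this
  have hdetK := (gram_posdef (lam := lam) (φ := φ) hlam0 K).det_pos
  have hdet0 := (gram_posdef (lam := lam) (φ := φ) hlam0 0).det_pos
  have hlogdiv : Real.log ((GramLam d lam φ K).det / (GramLam d lam φ 0).det) =
      Real.log ((GramLam d lam φ K).det) - Real.log ((GramLam d lam φ 0).det) :=
    Real.log_div hdetK.ne' hdet0.ne'
  constructor
  · have hsum : ∑ k ∈ Finset.range K, φ k ⬝ᵥ ((GramLam d lam φ k)⁻¹ *ᵥ φ k) ≤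
        ∑ k ∈ Finset.range K, 2 * Real.log (1 + φ k ⬝ᵥ ((GramLam d lam φ k)⁻¹ *ᵥ φ k)) := by
      refine Finset.sum_le_sum fun k hk => ?_
      obtain ⟨h0, h1⟩ := xk_mem (lam := lam) (φ := φ) hlam k (hφ' k (Finset.mem_range.mp hk))
      exact key_log _ h0 h1
    rw [hlogdiv, telescope hlam K]
    rw [← Finset.mul_sum] at hsum
    linarith
  · have hH := gram_herm (d := d) (lam := lam) (φ := φ) K
    have hdetle : (GramLam d lam φ K).det ≤ (lam + K) ^ d := by
      have hprod := hH.det_eq_prod_eigenvalues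
      have : (GramLam d lam φ K).det = ∏ i, hH.eigenvalues i := by
        simpa using hprod
      rw [this]
      calc ∏ i, hH.eigenvalues i ≤ ∏ _i : Fin d, (lam + K) := by
            refine Finset.prod_le_prod (fun i _ => ?_) (fun i _ => ?_)
            · exact ((gram_posdef (lam := lam) (φ := φ) hlam0 K).eigenvalues_pos i).le
            · exact eig_bound hlam0 hφ' i
        _ = (lam + K) ^ d := by simp
    have h1 : Real.log ((GramLam d lam φ K).det) ≤ d * Real.log (lam + K) := by
      calc Real.log ((GramLam d lam φ K).det) ≤ Real.log ((lam + K) ^ d) :=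
            Real.log_le_log hdetK hdetle
        _ = d * Real.log (lam + K) := by rw [Real.log_pow]
    have h2 : Real.log ((GramLam d lam φ 0).det) = d * Real.log lam := by
      rw [det0, Real.log_pow]
    have h3 : Real.log ((lam + K) / lam) = Real.log (lam + K) - Real.log lam :=
      Real.log_div (by positivity) hlam0.ne'
    rw [hlogdiv, h2, h3]
    nlinarith [h1]
end
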